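/- A partition λ is singular (i.e., for every i ∈ ℤ/eℤ its reduced i-signature contains no '−', equivalently all crystal operators ẽ_i of the level-one ŝl_e Fock-space crystal annihilate λ) if and only if λ is divisible by e, i.e., there is a partition μ with λ_k = e·μ_k for every k ≥ 1. -/

import Mathlib

/-- A partition: a weakly decreasing, eventually zero sequence of nonnegative integers.
`part k` is the `(k+1)`-st part, i.e. the length of row `k+1` of the Young diagram. -/
structure Partn where
  part : ℕ → ℕ
  antitone : ∀ k, part (k + 1) ≤ part k
  finite : ∃ N, ∀ k, N ≤ k → part k = 0

/-- Row `k` (0-indexed) has an addable box at its end. -/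
def AddableRow (p : Partn) (k : ℕ) : Prop :=
  k = 0 ∨ p.part k < p.part (k - 1)

/-- Row `k` (0-indexed) has a removable box at its end. -/
def RemovableRow (p : Partn) (k : ℕ) : Prop :=
  p.part (k + 1) < p.part k

/-- Content `x - y` of the addable box `(p.part k + 1, k + 1)` in row `k` (0-indexed). -/
def contA (p : Partn) (k : ℕ) : ℤ := (p.part k : ℤ) - k

/-- Content `x - y` of the removable box `(p.part k, k + 1)` in row `k` (0-indexed). -/
def contR (p : Partn) (k : ℕ) : ℤ := (p.part k : ℤ) - (k + 1)

open Classical in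
/-- The letter of the signature of `p` at content `c`: `some true` (i.e. '+') if `p` has an
addable box of content `c`, `some false` (i.e. '−') if `p` has a removable box of content
`c`, and `none` otherwise. -/
noncomputable def letter (p : Partn) (c : ℤ) : Option Bool :=
  if ∃ k, AddableRow p k ∧ contA p k = c then some true
  else if ∃ k, RemovableRow p k ∧ contR p k = c then some false
  else none

/-- Repeatedly delete consecutive subwords `−+` (i.e. `false, true`) until none remain. -/
def reduce : List Bool → List Bool
  | [] => []
  | a :: w =>
    match a, reduce w with
    | false, true :: tail => tail
    | _, r => a :: r

open Classical in
/-- The `i`-signature of `p`: the letters at all boxes of residue `i` mod `e`, listed in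
order of strictly decreasing content.  (All addable and removable boxes of `p` have
contents in the interval from `p.part 0` down to `-(N + 1)`, where `N` is a bound beyond
which all parts vanish.) -/
noncomputable def word (e : ℕ) (p : Partn) (i : ZMod e) : List Bool :=
  ((List.range (p.part 0 + Classical.choose p.finite + 2)).map
      (fun t => (p.part 0 : ℤ) - t)).filterMap
    (fun (c : ℤ) => if ((c : ZMod e) = i) then letter p c else none)

/-- A partition is singular for the level-one `ŝl_e` Fock-space crystal (i.e. all its
reduced `i`-signatures contain no '−', equivalently all crystal operators `ẽ_i`
annihilate it) if and only if it is divisible by `e`. -/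
def abp : List Bool → ℕ × ℕ
  | [] => (0, 0)
  | b :: w =>
    let r := abp w
    if b then (r.1 + 1, r.2)
    else if r.1 = 0 then (0, r.2 + 1) else (r.1 - 1, r.2)

lemma reduce_eq (w : List Bool) :
    reduce w = List.replicate (abp w).1 true ++ List.replicate (abp w).2 false := by
  induction w with
  | nil => rfl
  | cons a w ih =>
    have hcons : reduce (a :: w) = match a, reduce w with
      | false, true :: tail => tail
      | _, r => a :: r := rfl
    cases a
    · rw [hcons, ih]
      rcases h : (abp w).1 with _ | a1
      · rcases hb : (abp w).2 with _ | b
        · simp [abp, h, hb, List.replicate_succ]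
        · simp [abp, h, hb, List.replicate_succ]
      · simp [abp, h, List.replicate_succ]
    · rw [hcons, ih]
      simp [abp, List.replicate_succ]

lemma abp_sub (w : List Bool) :
    ((abp w).1 : ℤ) - (abp w).2 = (w.count true : ℤ) - w.count false := by
  induction w with
  | nil => simp [abp]
  | cons a w ih =>
    cases a
    · by_cases h : (abp w).1 = 0
      · simp [abp, h, List.count_cons] at ih ⊢
        omega
      · simp [abp, h, List.count_cons] at ih ⊢
        omega
    · simp [abp, List.count_cons] at ih ⊢
      omega

lemma abp_snd_eq_zero_iff (w : List Bool) :
    (abp w).2 = 0 ↔ ∀ s, s <:+ w → s.count false ≤ s.count true := by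
  induction w with
  | nil =>
    simp only [abp]
    constructor
    · intro _ s hs
      rw [List.suffix_nil.mp hs]
      simp
    · intro _; trivial
  | cons a w ih =>
    have hsub := abp_sub w
    have hsw : w <:+ a :: w := ⟨[a], rfl⟩
    cases a
    · by_cases h : (abp w).1 = 0
      · apply iff_of_false
        · simp [abp, h]
        · intro hR
          have h1 := hR (false :: w) (List.suffix_refl _)
          have h2 : (abp w).2 = 0 := ih.mpr (fun s hs => hR s (hs.trans hsw))
          simp [List.count_cons] at h1
          omega
      · have he : (abp (false :: w)).2 = (abp w).2 := by simp [abp, h]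
        rw [he]
        constructor
        · intro h0 s hs
          rcases List.suffix_cons_iff.mp hs with rfl | hs'
          · simp [List.count_cons]
            omega
          · exact ih.mp h0 s hs'
        · intro hR
          exact ih.mpr (fun s hs => hR s (hs.trans hsw))
    · have he : (abp (true :: w)).2 = (abp w).2 := by simp [abp]
      rw [he]
      constructor
      · intro h0 s hs
        rcases List.suffix_cons_iff.mp hs with rfl | hs'
        · have := ih.mp h0 w (List.suffix_refl _)
          simp [List.count_cons]
          omega
        · exact ih.mp h0 s hs'
      · intro hR
        exact ih.mpr (fun s hs => hR s (hs.trans hsw))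

lemma no_false_reduce_iff (w : List Bool) :
    false ∉ reduce w ↔ ∀ s, s <:+ w → s.count false ≤ s.count true := by
  rw [← abp_snd_eq_zero_iff, reduce_eq]
  simp [List.mem_append, List.mem_replicate]

def bfun (p : Partn) (k : ℕ) : ℤ := (p.part k : ℤ) - (k + 1)

lemma bfun_anti (p : Partn) : StrictAnti (bfun p) := by
  apply strictAnti_nat_of_succ_lt
  intro k
  have h := p.antitone k
  simp only [bfun]
  push_cast
  omega

def inB (p : Partn) (c : ℤ) : Prop := ∃ k, bfun p k = c

noncomputable def NN (p : Partn) : ℕ := Classical.choose p.finite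

lemma NN_spec (p : Partn) : ∀ k, NN p ≤ k → p.part k = 0 := Classical.choose_spec p.finite

lemma bfun_eq_of_ge (p : Partn) {k : ℕ} (h : NN p ≤ k) : bfun p k = -(k + 1) := by
  simp [bfun, NN_spec p k h]

lemma inB_of_le (p : Partn) {c : ℤ} (h : c ≤ -(NN p : ℤ) - 1) : inB p c := by
  refine ⟨(-c - 1).toNat, ?_⟩
  have h0 : (0 : ℤ) ≤ -c - 1 := by omega
  have ht : ((-c - 1).toNat : ℤ) = -c - 1 := Int.toNat_of_nonneg h0
  have hN : NN p ≤ (-c - 1).toNat := by omega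
  rw [bfun_eq_of_ge p hN]
  omega

open Classical in
noncomputable def gg (p : Partn) (c : ℤ) : ℤ := if inB p c then 0 else 1

lemma gg_nonneg (p : Partn) (c : ℤ) : 0 ≤ gg p c := by
  unfold gg; split <;> omega

lemma gg_le_one (p : Partn) (c : ℤ) : gg p c ≤ 1 := by
  unfold gg; split <;> omega

lemma gg_inB (p : Partn) {c : ℤ} (h : inB p c) : gg p c = 0 := by
  simp [gg, h]

lemma gg_eq_zero (p : Partn) {c : ℤ} (h : c ≤ -(NN p : ℤ) - 1) : gg p c = 0 := by
  simp [gg, inB_of_le p h]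

lemma gg_eq_zero_iff (p : Partn) (c : ℤ) : gg p c = 0 ↔ inB p c := by
  unfold gg; split <;> simp_all

noncomputable def DD (e : ℕ) (p : Partn) (c : ℤ) : ℤ :=
  ∑ t ∈ Finset.range (c + NN p + 2).toNat, gg p (c - t * e)

lemma DD_stab (e : ℕ) (he : 1 ≤ e) (p : Partn) {c : ℤ} {T : ℕ}
    (hT : (c + NN p + 2).toNat ≤ T) :
    DD e p c = ∑ t ∈ Finset.range T, gg p (c - t * e) := by
  apply Finset.sum_subset (Finset.range_subset_range.mpr hT)
  intro t _ ht
  simp only [Finset.mem_range, not_lt] at ht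
  apply gg_eq_zero
  have h1 : c + NN p + 2 ≤ (t : ℤ) := Int.toNat_le.mp ht
  have h2 : (t : ℤ) ≤ (t : ℤ) * e := by
    nlinarith [(show (1:ℤ) ≤ (e:ℤ) by exact_mod_cast he), (show (0:ℤ) ≤ (t:ℤ) by positivity)]
  omega

lemma DD_zero (e : ℕ) (p : Partn) {c : ℤ} (h : c ≤ -(NN p : ℤ) - 1) : DD e p c = 0 := by
  apply Finset.sum_eq_zero
  intro t _
  apply gg_eq_zero
  have : (0:ℤ) ≤ (t : ℤ) * e := by positivity
  omega

lemma DD_nonneg (e : ℕ) (p : Partn) (c : ℤ) : 0 ≤ DD e p c :=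
  Finset.sum_nonneg fun t _ => gg_nonneg p _

lemma DD_rec (e : ℕ) (he : 1 ≤ e) (p : Partn) (c : ℤ) :
    DD e p c = gg p c + DD e p (c - e) := by
  have h1 : DD e p c = ∑ t ∈ Finset.range ((c + NN p + 2).toNat + 1), gg p (c - t * e) :=
    DD_stab e he p (Nat.le_succ _)
  rw [h1, Finset.sum_range_succ']
  have h2 : ∀ t : ℕ, gg p (c - (t + 1 : ℕ) * e) = gg p ((c - e) - t * e) := by
    intro t; congr 1; push_cast; ring
  rw [Finset.sum_congr rfl (fun t _ => h2 t)]
  have h3 : DD e p (c - e) = ∑ t ∈ Finset.range ((c + NN p + 2).toNat), gg p ((c - e) - t * e) := by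
    apply DD_stab e he p
    apply Int.toNat_le_toNat
    omega
  rw [← h3]
  simp
  ring

lemma rr_ex (p : Partn) (c : ℤ) : ∃ k, bfun p k ≤ c := by
  refine ⟨NN p + (-c).toNat + 1, ?_⟩
  rw [bfun_eq_of_ge p (by omega)]
  have := Int.self_le_toNat (-c)
  push_cast
  omega

noncomputable def rr (p : Partn) (c : ℤ) : ℕ :=
  @Nat.find _ (fun _ => Classical.dec _) (rr_ex p c)

lemma rr_spec (p : Partn) (c : ℤ) : bfun p (rr p c) ≤ c :=
  @Nat.find_spec _ (fun _ => Classical.dec _) (rr_ex p c)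

lemma rr_min (p : Partn) (c : ℤ) {j : ℕ} (h : j < rr p c) : c < bfun p j := by
  have := @Nat.find_min _ (fun _ => Classical.dec _) (rr_ex p c) j h
  omega

lemma rr_eq (p : Partn) (c : ℤ) (k : ℕ) (h1 : bfun p k ≤ c) (h2 : ∀ j, j < k → c < bfun p j) :
    rr p c = k := by
  have hle : rr p c ≤ k := @Nat.find_le _ _ (fun _ => Classical.dec _) (rr_ex p c) h1
  rcases lt_or_eq_of_le hle with hlt | heq
  · exact absurd (rr_spec p c) (by have := h2 _ hlt; omega)
  · exact heq

lemma rr_of_inB (p : Partn) {c : ℤ} {k : ℕ} (hk : bfun p k = c) : rr p c = k := by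
  apply rr_eq p c k (le_of_eq hk)
  intro j hj
  have := bfun_anti p hj
  omega

lemma rr_pred_inB (p : Partn) {c : ℤ} (h : inB p c) : rr p (c - 1) = rr p c + 1 := by
  obtain ⟨k, hk⟩ := h
  rw [rr_of_inB p hk]
  apply rr_eq
  · have := bfun_anti p (show k < k + 1 by omega)
    omega
  · intro j hj
    have hja : bfun p k ≤ bfun p j := (bfun_anti p).antitone (by omega)
    omega

lemma rr_pred_nB (p : Partn) {c : ℤ} (h : ¬ inB p c) : rr p (c - 1) = rr p c := by
  apply rr_eq
  · have h1 := rr_spec p c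
    have h2 : bfun p (rr p c) ≠ c := fun hc => h ⟨_, hc⟩
    omega
  · intro j hj
    have := rr_min p c hj
    omega

noncomputable def EE (e : ℕ) (p : Partn) (c : ℤ) : ℤ :=
  ∑ j ∈ Finset.range e, DD e p (c - j)

lemma EE_pred (e : ℕ) (he : 1 ≤ e) (p : Partn) (c : ℤ) :
    EE e p (c - 1) = EE e p c - gg p c := by
  have key : ∑ j ∈ Finset.range (e + 1), DD e p (c - j)
      = EE e p (c - 1) + DD e p c := by
    rw [Finset.sum_range_succ']
    congr 1
    · apply Finset.sum_congr rfl
      intro j _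
      congr 1
      push_cast
      ring
    · simp
  have key2 : ∑ j ∈ Finset.range (e + 1), DD e p (c - j)
      = EE e p c + DD e p (c - e) := by
    rw [Finset.sum_range_succ]
    rfl
  have hrec := DD_rec e he p c
  unfold EE at *
  omega

lemma rr_low (p : Partn) {c : ℤ} (h : c ≤ -(NN p : ℤ) - 1) : (rr p c : ℤ) = -c - 1 := by
  have h0 : (0 : ℤ) ≤ -c - 1 := by omega
  have hk : rr p c = (-c - 1).toNat := by
    apply rr_eq
    · rw [bfun_eq_of_ge p (by omega : NN p ≤ (-c-1).toNat)]
      omega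
    · intro j hj
      have h1 : bfun p ((-c-1).toNat) = c := by
        rw [bfun_eq_of_ge p (by omega : NN p ≤ (-c-1).toNat)]; omega
      have := bfun_anti p hj
      omega
  rw [hk]
  omega

lemma const_of_step (f : ℤ → ℤ) (h : ∀ c : ℤ, f c = f (c + 1)) : ∀ a b : ℤ, f a = f b := by
  have h0 : ∀ a : ℤ, f a = f 0 := by
    intro a
    induction a using Int.induction_on with
    | zero => rfl
    | succ n ih => rw [← h n, ih]
    | pred n ih => rw [h (-n - 1)]; simpa using ih
  intro a b; rw [h0 a, h0 b]

lemma EE_eq (e : ℕ) (he : 1 ≤ e) (p : Partn) (c : ℤ) :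
    EE e p c = c + rr p c + 1 := by
  set f : ℤ → ℤ := fun c => EE e p c - (c + rr p c + 1) with hf
  have hstep : ∀ c : ℤ, f c = f (c + 1) := by
    intro c
    have hp := EE_pred e he p (c + 1)
    simp only [add_sub_cancel_right] at hp
    by_cases h : inB p (c + 1)
    · have h1 := rr_pred_inB p h
      simp only [add_sub_cancel_right] at h1
      have h2 := gg_inB p h
      simp only [hf]
      push_cast [h1]
      omega
    · have h1 := rr_pred_nB p h
      simp only [add_sub_cancel_right] at h1
      have h2 : gg p (c + 1) = 1 := by simp [gg, h]
      simp only [hf]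
      rw [h1]
      omega
  have hbase : f (-(NN p : ℤ) - 1) = 0 := by
    simp only [hf]
    have h1 : EE e p (-(NN p : ℤ) - 1) = 0 := by
      apply Finset.sum_eq_zero
      intro j _
      apply DD_zero
      have : (0:ℤ) ≤ (j:ℤ) := by positivity
      omega
    have h2 := rr_low p (le_refl (-(NN p : ℤ) - 1))
    omega
  have := const_of_step f hstep c (-(NN p : ℤ) - 1)
  simp only [hf] at this hbase
  omega

lemma add_iff (p : Partn) (c : ℤ) :
    (∃ k, AddableRow p k ∧ contA p k = c) ↔ inB p (c - 1) ∧ ¬ inB p c := by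
  constructor
  · rintro ⟨k, hA, hc⟩
    have hbk : bfun p k = c - 1 := by simp only [bfun, contA] at hc ⊢; omega
    refine ⟨⟨k, hbk⟩, ?_⟩
    rintro ⟨j, hj⟩
    have hjk : j < k := by
      have : bfun p k < bfun p j := by omega
      exact (bfun_anti p).lt_iff_gt.mp this
    have hk1 : k ≠ 0 := by omega
    rcases hA with h0 | hlt
    · exact hk1 h0
    · have hj' : bfun p (k - 1) ≤ bfun p j := (bfun_anti p).antitone (by omega)
      have hb1 : bfun p (k - 1) = (p.part (k - 1) : ℤ) - k := by
        simp only [bfun]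
        have : (k : ℤ) - 1 + 1 = k := by omega
        have hcast : ((k - 1 : ℕ) : ℤ) = (k : ℤ) - 1 := by omega
        rw [hcast]; ring
      have hplt : (p.part k : ℤ) < p.part (k - 1) := by exact_mod_cast hlt
      simp only [contA] at hc
      omega
  · rintro ⟨⟨k, hk⟩, hnc⟩
    refine ⟨k, ?_, ?_⟩
    · by_cases h0 : k = 0
      · exact Or.inl h0
      · refine Or.inr ?_
        by_contra hle
        push_neg at hle
        have hge := p.antitone (k - 1)
        have hk1 : k - 1 + 1 = k := by omega
        rw [hk1] at hge
        have heq : p.part (k - 1) = p.part k := le_antisymm hle hge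
        apply hnc
        refine ⟨k - 1, ?_⟩
        simp only [bfun] at hk ⊢
        have hcast : ((k - 1 : ℕ) : ℤ) = (k : ℤ) - 1 := by omega
        rw [hcast, heq]
        omega
    · simp only [bfun] at hk
      simp only [contA]
      omega

lemma rem_iff (p : Partn) (c : ℤ) :
    (∃ k, RemovableRow p k ∧ contR p k = c) ↔ inB p c ∧ ¬ inB p (c - 1) := by
  constructor
  · rintro ⟨k, hR, hc⟩
    have hbk : bfun p k = c := hc
    refine ⟨⟨k, hbk⟩, ?_⟩
    rintro ⟨j, hj⟩
    have hjk : k < j := by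
      have : bfun p j < bfun p k := by omega
      exact (bfun_anti p).lt_iff_gt.mp this
    have hj' : bfun p j ≤ bfun p (k + 1) := (bfun_anti p).antitone (by omega)
    have hb1 : bfun p (k + 1) = (p.part (k + 1) : ℤ) - (k + 2) := by
      simp only [bfun]; push_cast; ring
    have hplt : (p.part (k + 1) : ℤ) < p.part k := by exact_mod_cast hR
    simp only [bfun] at hbk
    omega
  · rintro ⟨⟨k, hk⟩, hn⟩
    refine ⟨k, ?_, hk⟩
    unfold RemovableRow
    by_contra hle
    push_neg at hle
    have hge := p.antitone k
    have heq : p.part (k + 1) = p.part k := le_antisymm hge hle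
    apply hn
    refine ⟨k + 1, ?_⟩
    simp only [bfun] at hk ⊢
    push_cast
    rw [heq]
    push_cast at hk
    omega

def val : Option Bool → ℤ
  | some true => 1
  | some false => -1
  | none => 0

lemma val_letter (p : Partn) (c : ℤ) : val (letter p c) = gg p c - gg p (c - 1) := by
  by_cases h1 : inB p c <;> by_cases h2 : inB p (c - 1) <;>
    simp [letter, add_iff, rem_iff, gg, h1, h2, val]


lemma val_some_true : val (some true) = 1 := rfl
lemma val_some_false : val (some false) = -1 := rfl
lemma val_none : val none = 0 := rfl

lemma count_filterMap_sum (F : ℤ → Option Bool) (l : List ℤ) :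
    ((l.filterMap F).count true : ℤ) - ((l.filterMap F).count false : ℤ)
      = (l.map fun c => val (F c)).sum := by
  induction l with
  | nil => simp
  | cons c l ih =>
    rcases hF : F c with _ | b
    · simp only [List.filterMap_cons, hF, List.map_cons, List.sum_cons, val_none]
      omega
    · cases b <;>
      · simp [List.filterMap_cons, hF, List.count_cons, val_some_true, val_some_false]
        omega

lemma filterMap_suffix (F : ℤ → Option Bool) {l₁ l₂ : List ℤ} (h : l₁ <:+ l₂) :
    l₁.filterMap F <:+ l₂.filterMap F := by
  obtain ⟨u, rfl⟩ := h
  exact ⟨u.filterMap F, List.filterMap_append.symm⟩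

lemma suffix_filterMap (F : ℤ → Option Bool) :
    ∀ (l : List ℤ) (s : List Bool), s <:+ l.filterMap F →
      ∃ l', l' <:+ l ∧ s = l'.filterMap F := by
  intro l
  induction l with
  | nil =>
    intro s hs
    refine ⟨[], List.suffix_refl _, ?_⟩
    simpa using List.suffix_nil.mp (by simpa using hs)
  | cons a l ih =>
    intro s hs
    rcases hF : F a with _ | b
    · simp only [List.filterMap_cons, hF] at hs
      obtain ⟨l', hl', rfl⟩ := ih s hs
      exact ⟨l', hl'.trans ⟨[a], rfl⟩, rfl⟩
    · simp only [List.filterMap_cons, hF] at hs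
      rcases List.suffix_cons_iff.mp hs with rfl | hs'
      · exact ⟨a :: l, List.suffix_refl _, by simp [List.filterMap_cons, hF]⟩
      · obtain ⟨l', hl', rfl⟩ := ih s hs'
        exact ⟨l', hl'.trans ⟨[a], rfl⟩, rfl⟩

lemma suffix_eq_drop {α : Type*} {l' l : List α} (h : l' <:+ l) :
    l' = l.drop (l.length - l'.length) := by
  obtain ⟨u, rfl⟩ := h
  simp [List.drop_left]

open Classical in
noncomputable def Fi (e : ℕ) (p : Partn) (i : ZMod e) : ℤ → Option Bool :=
  fun c => if ((c : ZMod e) = i) then letter p c else none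

noncomputable def LL (p : Partn) : ℕ := p.part 0 + NN p + 2

noncomputable def mlist (p : Partn) : List ℤ :=
  (List.range (LL p)).map (fun t => (p.part 0 : ℤ) - t)

lemma flatMap_pure_eq_map (f : ℕ → ℤ) (l : List ℕ) :
    l.flatMap (fun a => [f a]) = l.map f := by
  induction l <;> simp_all

lemma mlist_eq (p : Partn) :
    mlist p = (List.range (LL p)).map (fun t : ℕ => (p.part 0 : ℤ) - (t : ℤ)) := by
  show ((List.range (LL p)).flatMap (fun a : ℕ => [((a : ℕ) : ℤ)])).map _ = _
  rw [flatMap_pure_eq_map (fun a : ℕ => ((a : ℕ) : ℤ)), List.map_map]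
  rfl

lemma mlist_length (p : Partn) : (mlist p).length = LL p := by
  rw [mlist_eq]
  simp

lemma word_eq (e : ℕ) (p : Partn) (i : ZMod e) :
    word e p i = (mlist p).filterMap (Fi e p i) :=
  rfl

noncomputable def Sv (e : ℕ) (p : Partn) (i : ZMod e) (d : ℕ) : ℤ :=
  (((List.range (LL p)).drop d).map (fun t : ℕ => val (Fi e p i ((p.part 0 : ℤ) - (t : ℤ))))).sum

lemma Sv_eq_zero (e : ℕ) (p : Partn) (i : ZMod e) {d : ℕ} (h : LL p ≤ d) :
    Sv e p i d = 0 := by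
  unfold Sv
  rw [List.drop_eq_nil_of_le (by simpa using h)]
  simp

lemma Sv_rec (e : ℕ) (p : Partn) (i : ZMod e) {d : ℕ} (h : d < LL p) :
    Sv e p i d = val (Fi e p i ((p.part 0 : ℤ) - d)) + Sv e p i (d + 1) := by
  unfold Sv
  rw [List.drop_eq_getElem_cons (by simpa using h)]
  simp

lemma Sv_counts (e : ℕ) (p : Partn) (i : ZMod e) (d : ℕ) :
    ((((mlist p).drop d).filterMap (Fi e p i)).count true : ℤ)
      - (((mlist p).drop d).filterMap (Fi e p i)).count false = Sv e p i d := by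
  rw [mlist_eq, ← List.map_drop, count_filterMap_sum, List.map_map]
  unfold Sv
  simp only [Function.comp_def]

lemma Sv_window (e : ℕ) (he : 1 ≤ e) (p : Partn) (i : ZMod e) :
    ∀ (n d : ℕ), LL p = d + n → ∀ c : ℤ, ((c : ZMod e) = i) →
      (p.part 0 : ℤ) - d - e < c → c ≤ (p.part 0 : ℤ) - d →
      Sv e p i d = DD e p c - DD e p (c - 1) := by
  have hLL : (LL p : ℤ) = (p.part 0 : ℤ) + NN p + 2 := by
    simp only [LL]; push_cast; ring
  intro n
  induction n with
  | zero =>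
    intro d hL c hi h1 h2
    rw [Sv_eq_zero e p i (by omega)]
    have hc : c ≤ -(NN p : ℤ) - 2 := by omega
    rw [DD_zero e p (by omega : c ≤ -(NN p : ℤ) - 1),
        DD_zero e p (by omega : c - 1 ≤ -(NN p : ℤ) - 1)]
    ring
  | succ n ih =>
    intro d hL c hi h1 h2
    have hd : d < LL p := by omega
    rw [Sv_rec e p i hd]
    by_cases hc : c = (p.part 0 : ℤ) - d
    · subst hc
      have hFi : Fi e p i ((p.part 0 : ℤ) - d) = letter p ((p.part 0 : ℤ) - d) := by
        simp [Fi, hi]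
      rw [hFi, val_letter]
      set c := (p.part 0 : ℤ) - d with hcdef
      have hcast : (((c - e : ℤ)) : ZMod e) = i := by
        rw [← hi]; push_cast; simp
      have hwin := ih (d + 1) (by omega) (c - e) hcast (by push_cast; omega)
        (by push_cast; omega)
      rw [hwin]
      have hr1 := DD_rec e he p c
      have hr2 := DD_rec e he p (c - 1)
      have harg : c - 1 - e = c - e - 1 := by ring
      rw [harg] at hr2
      omega
    · have hclt : c < (p.part 0 : ℤ) - d := lt_of_le_of_ne h2 hc
      have hne : ¬ ((((p.part 0 : ℤ) - d : ℤ)) : ZMod e) = i := by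
        intro heq
        have hdvd : (e : ℤ) ∣ ((p.part 0 : ℤ) - d) - c :=
          ((ZMod.intCast_eq_intCast_iff c ((p.part 0 : ℤ) - d) e).mp (hi.trans heq.symm)).dvd
        have := Int.le_of_dvd (by omega) hdvd
        omega
      have hFi : Fi e p i ((p.part 0 : ℤ) - d) = none := by
        simp only [Fi]
        exact if_neg hne
      rw [hFi]
      have hwin := ih (d + 1) (by omega) c hi (by push_cast; omega) (by push_cast; omega)
      rw [hwin]
      simp [val]

lemma sing_iff_mon (e : ℕ) (he : 1 ≤ e) (p : Partn) :
    (∀ i : ZMod e, false ∉ reduce (word e p i)) ↔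
      (∀ c : ℤ, c ≤ (p.part 0 : ℤ) → DD e p (c - 1) ≤ DD e p c) := by
  haveI : NeZero e := ⟨by omega⟩
  have hLL : (LL p : ℤ) = (p.part 0 : ℤ) + NN p + 2 := by
    simp only [LL]; push_cast; ring
  constructor
  · intro h c hc
    by_cases hlow : c ≤ -(NN p : ℤ) - 1
    · rw [DD_zero e p (by omega)]
      exact DD_nonneg e p c
    · push_neg at hlow
      set i : ZMod e := ((c : ℤ) : ZMod e) with hi
      set d : ℕ := ((p.part 0 : ℤ) - c).toNat with hd
      have hdz : (d : ℤ) = (p.part 0 : ℤ) - c := Int.toNat_of_nonneg (by omega)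
      have hdL : d ≤ LL p := by omega
      have hs := (no_false_reduce_iff _).mp (h i)
      have hsuf : (((mlist p).drop d).filterMap (Fi e p i)) <:+ word e p i := by
        rw [word_eq]
        exact filterMap_suffix _ (List.drop_suffix _ _)
      have hcount := hs _ hsuf
      have hN := Sv_counts e p i d
      have hwin := Sv_window e he p i (LL p - d) d (by omega) c rfl (by omega) (by omega)
      omega
  · intro hmon i
    rw [no_false_reduce_iff]
    intro s hs
    rw [word_eq] at hs
    obtain ⟨l', hl', rfl⟩ := suffix_filterMap _ _ s hs
    have hleq := suffix_eq_drop hl'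
    set d := ((mlist p).length - l'.length) with hdd
    have hdL : d ≤ LL p := by
      have := mlist_length p
      omega
    rw [hleq]
    have hN := Sv_counts e p i d
    obtain ⟨i0, rfl⟩ : ∃ i0 : ℤ, ((i0 : ℤ) : ZMod e) = i :=
      ⟨(i.val : ℤ), by push_cast; exact ZMod.natCast_rightInverse i⟩
    set x := (p.part 0 : ℤ) - d - i0 with hx
    set c := (p.part 0 : ℤ) - d - (x % e) with hc
    have hm1 : 0 ≤ x % e := Int.emod_nonneg x (by exact_mod_cast (by omega : e ≠ 0))
    have hm2 : x % e < e := Int.emod_lt_of_pos x (by exact_mod_cast (by omega : 0 < e))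
    have hcast : ((c : ℤ) : ZMod e) = ((i0 : ℤ) : ZMod e) := by
      have hdiv : c = i0 + e * (x / e) := by
        have := Int.mul_ediv_add_emod x e
        omega
      rw [hdiv]
      push_cast
      simp
    have hwin := Sv_window e he p _ (LL p - d) d (by omega) c hcast (by omega) (by omega)
    have hmc := hmon c (by omega)
    omega

lemma bfun_le_top (p : Partn) (k : ℕ) : bfun p k ≤ (p.part 0 : ℤ) := by
  have h0 : bfun p k ≤ bfun p 0 := (bfun_anti p).antitone (Nat.zero_le k)
  simp only [bfun] at h0 ⊢
  omega

lemma mono_chain (e : ℕ) (p : Partn) (X : ℤ)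
    (h : ∀ x : ℤ, x ≤ X → DD e p (x - 1) ≤ DD e p x) :
    ∀ a b : ℤ, a ≤ b → b ≤ X → DD e p a ≤ DD e p b := by
  intro a b hab
  refine Int.le_induction (motive := fun b _ => b ≤ X → DD e p a ≤ DD e p b) ?_ ?_ b hab
  · intro _; exact le_refl _
  · intro n hn ih hX
    have h1 := h (n + 1) hX
    simp only [add_sub_cancel_right] at h1
    have h2 := ih (by omega)
    omega

theorem singular_iff_divisible_by_e (e : ℕ) (he : 1 ≤ e) (p : Partn) :
    (∀ i : ZMod e, false ∉ reduce (word e p i)) ↔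
      ∃ q : Partn, ∀ k, p.part k = e * q.part k := by
  rw [sing_iff_mon e he p]
  constructor
  · intro hmon
    have hdvd : ∀ k, e ∣ p.part k := by
      intro k
      set c := bfun p k with hcdef
      have hcP : c ≤ (p.part 0 : ℤ) := hcdef ▸ bfun_le_top p k
      have hgg : gg p c = 0 := gg_inB p ⟨k, rfl⟩
      have hrec := DD_rec e he p c
      have hconst : ∀ j ∈ Finset.range e, DD e p (c - j) = DD e p (c - e) := by
        intro j hj
        simp only [Finset.mem_range] at hj
        have hj' : (j : ℤ) < e := by exact_mod_cast hj
        have hj0 : (0:ℤ) ≤ (j:ℤ) := by positivity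
        have hle1 : DD e p (c - e) ≤ DD e p (c - j) :=
          mono_chain e p (p.part 0 : ℤ) hmon (c - e) (c - j) (by omega) (by omega)
        have hle2 : DD e p (c - j) ≤ DD e p c :=
          mono_chain e p (p.part 0 : ℤ) hmon (c - j) c (by omega) (by omega)
        omega
      have hE : EE e p c = (e : ℤ) * DD e p (c - e) := by
        unfold EE
        rw [Finset.sum_congr rfl hconst, Finset.sum_const, Finset.card_range,
          nsmul_eq_mul]
      have hEeq := EE_eq e he p c
      have hrr : rr p c = k := rr_of_inB p rfl
      have hpart : c + k + 1 = (p.part k : ℤ) := by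
        simp only [hcdef, bfun]
        ring
      have hmul : (e : ℤ) * DD e p (c - e) = (p.part k : ℤ) := by
        rw [← hE, hEeq, hrr]
        omega
      have : (e : ℤ) ∣ (p.part k : ℤ) := ⟨_, hmul.symm⟩
      exact_mod_cast this
    refine ⟨⟨fun k => p.part k / e, fun k => Nat.div_le_div_right (p.antitone k),
      ⟨NN p, fun k hk => by show p.part k / e = 0; rw [NN_spec p k hk]; exact Nat.zero_div e⟩⟩, ?_⟩
    intro k
    exact (Nat.mul_div_cancel' (hdvd k)).symm
  · rintro ⟨q, hq⟩
    have hdvd : ∀ k, (e : ℤ) ∣ (p.part k : ℤ) := fun k => ⟨q.part k, by exact_mod_cast hq k⟩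
    have claim : ∀ n : ℕ, ∀ c : ℤ, c ≤ -(NN p : ℤ) - 1 + n → DD e p (c - 1) ≤ DD e p c := by
      intro n
      induction n with
      | zero =>
        intro c hcn
        rw [DD_zero e p (by omega)]
        exact DD_nonneg e p _
      | succ n ih =>
        intro c hcn
        by_cases hcc : c ≤ -(NN p : ℤ) - 1 + n
        · exact ih c hcc
        · by_contra hcon
          push_neg at hcon
          have ihx : ∀ x : ℤ, x ≤ c - 1 → DD e p (x - 1) ≤ DD e p x := fun x hx =>
            ih x (by omega)
          have chain := mono_chain e p (c - 1) ihx
          have hrec1 := DD_rec e he p c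
          have hrec2 := DD_rec e he p (c - 1)
          have hg1 := gg_le_one p c
          have hg0 := gg_nonneg p c
          have hg1' := gg_le_one p (c - 1)
          have hg0' := gg_nonneg p (c - 1)
          have he' : (1:ℤ) ≤ (e:ℤ) := by exact_mod_cast he
          have hch := chain (c - 1 - e) (c - e) (by omega) (by omega)
          have hgc : gg p c = 0 := by omega
          have hDc : DD e p c = DD e p (c - e) := by omega
          have hD1 : DD e p (c - 1) = DD e p (c - e) + 1 := by omega
          rcases (show e = 1 ∨ 2 ≤ e by omega) with he1 | he2
          · subst he1
            push_cast at hD1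
            omega
          · obtain ⟨k, hbk⟩ : inB p c := by rw [← gg_eq_zero_iff]; exact hgc
            have hEeq := EE_eq e he p c
            have hrr : rr p c = k := rr_of_inB p hbk
            have hpart : c + k + 1 = (p.part k : ℤ) := by
              simp only [bfun] at hbk
              omega
            obtain ⟨w, hw⟩ := hdvd k
            set v := DD e p (c - e) with hv
            set m := e - 1 with hm
            have hem : e = m + 1 := by omega
            have hm1 : 1 ≤ m := by omega
            have hsplit : EE e p c = (∑ j ∈ Finset.range m, DD e p (c - 1 - j)) + DD e p c := by
              unfold EE
              rw [hem, Finset.sum_range_succ']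
              congr 1
              · apply Finset.sum_congr rfl
                intro j _
                congr 1
                push_cast
                ring
              · simp
            have hub : ∀ j ∈ Finset.range m, DD e p (c - 1 - j) ≤ v + 1 := by
              intro j hj
              simp only [Finset.mem_range] at hj
              have hj0 : (0:ℤ) ≤ (j:ℤ) := by positivity
              have := chain (c - 1 - j) (c - 1) (by omega) (by omega)
              omega
            have hlb : ∀ j ∈ Finset.range m, v ≤ DD e p (c - 1 - j) := by
              intro j hj
              simp only [Finset.mem_range] at hj
              have hj' : (j : ℤ) < m := by exact_mod_cast hj
              have hj0 : (0:ℤ) ≤ (j:ℤ) := by positivity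
              rw [hv]
              exact chain (c - e) (c - 1 - j) (by omega) (by omega)
            have hTub : (∑ j ∈ Finset.range m, DD e p (c - 1 - j)) ≤ m * (v + 1) := by
              calc (∑ j ∈ Finset.range m, DD e p (c - 1 - j))
                  ≤ ∑ _j ∈ Finset.range m, (v + 1) := Finset.sum_le_sum hub
                _ = m * (v + 1) := by
                  rw [Finset.sum_const, Finset.card_range, nsmul_eq_mul]
            have hTlb : (m : ℤ) * v + 1 ≤ ∑ j ∈ Finset.range m, DD e p (c - 1 - j) := by
              have h1 : (1 : ℤ) ≤ ∑ j ∈ Finset.range m, (DD e p (c - 1 - j) - v) := by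
                have hsingle := Finset.single_le_sum
                  (f := fun j : ℕ => DD e p (c - 1 - j) - v)
                  (fun j hj => sub_nonneg.mpr (hlb j hj))
                  (show 0 ∈ Finset.range m by simp only [Finset.mem_range]; omega)
                have hsingle' : DD e p (c - 1) - v
                    ≤ ∑ j ∈ Finset.range m, (DD e p (c - 1 - j) - v) := by
                  simpa using hsingle
                omega
              have h2 : ∑ j ∈ Finset.range m, (DD e p (c - 1 - j) - v)
                  = (∑ j ∈ Finset.range m, DD e p (c - 1 - j)) - m * v := by
                rw [Finset.sum_sub_distrib, Finset.sum_const, Finset.card_range, nsmul_eq_mul]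
              omega
            have hEval : EE e p c = (e : ℤ) * w := by
              rw [hEeq, hrr]
              omega
            have hev1 : (e : ℤ) * v = (m : ℤ) * v + v := by
              rw [hem]; push_cast; ring
            have hev2 : (e : ℤ) * (v + 1) = (m : ℤ) * (v + 1) + v + 1 := by
              rw [hem]; push_cast; ring
            have hlow : (e : ℤ) * v < (e : ℤ) * w := by
              have : (m:ℤ) * v + 1 + v ≤ (e:ℤ) * w := by omega
              omega
            have hhigh : (e : ℤ) * w < (e : ℤ) * (v + 1) := by
              have : (e:ℤ) * w ≤ (m:ℤ) * (v + 1) + v := by omega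
              omega
            have hvw : v < w := lt_of_mul_lt_mul_left hlow (by positivity)
            have hwv : w < v + 1 := lt_of_mul_lt_mul_left hhigh (by positivity)
            omega
    intro c hc
    exact claim (c + NN p + 1).toNat c (by have := Int.self_le_toNat (c + NN p + 1); omega)
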